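/- A pair of m×m matrices (C_x, C_y) over GF(2) is dyadic if and only if C_x is invertible and C_y = L U J C_x for some lower unitriangular matrix L and some upper unitriangular matrix U, where J is the anti-diagonal matrix. -/

import Mathlib

open Matrix

/-- The binary Pascal matrix over GF(2): entries C(j-1, i-1) mod 2 (1-indexed),
i.e. C(j, i) with 0-indexed `Fin`. -/
def pascal (m : ℕ) : Matrix (Fin m) (Fin m) (ZMod 2) :=
  fun i j => (Nat.choose j.val i.val : ZMod 2)

/-- The anti-diagonal matrix over GF(2), with ones on the anti-diagonal. -/
def antiDiag (m : ℕ) : Matrix (Fin m) (Fin m) (ZMod 2) :=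
  fun i j => if i.val + j.val + 1 = m then 1 else 0
/-- Lower unitriangular matrix over GF(2). -/
def IsLowerUni {m : ℕ} (L : Matrix (Fin m) (Fin m) (ZMod 2)) : Prop :=
  (∀ i, L i i = 1) ∧ ∀ i j : Fin m, i < j → L i j = 0

/-- Upper unitriangular matrix over GF(2). -/
def IsUpperUni {m : ℕ} (U : Matrix (Fin m) (Fin m) (ZMod 2)) : Prop :=
  (∀ i, U i i = 1) ∧ ∀ i j : Fin m, j < i → U i j = 0
/-- The hybrid matrix whose first `m - r` rows are the first `m - r` rows of `Cx`
and whose last `r` rows are the first `r` rows of `Cy`. -/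
def hybrid (m r : ℕ) (Cx Cy : Matrix (Fin m) (Fin m) (ZMod 2)) :
    Matrix (Fin m) (Fin m) (ZMod 2) :=
  fun i j =>
    if i.val < m - r then Cx i j
    else Cy ⟨i.val - (m - r), Nat.lt_of_le_of_lt (Nat.sub_le _ _) i.isLt⟩ j

/-- A dyadic pair: all hybrid matrices are invertible. -/
def DyadicPair {m : ℕ} (Cx Cy : Matrix (Fin m) (Fin m) (ZMod 2)) : Prop :=
  ∀ r ≤ m, (hybrid m r Cx Cy).det ≠ 0

namespace DyadicAux

/-- Leading principal `r × r` submatrix. -/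
def lead {m : ℕ} (r : ℕ) (h : r ≤ m) (A : Matrix (Fin m) (Fin m) (ZMod 2)) :
    Matrix (Fin r) (Fin r) (ZMod 2) :=
  A.submatrix (Fin.castLE h) (Fin.castLE h)

lemma zmod2_ne_zero : ∀ x : ZMod 2, x ≠ 0 → x = 1 := by decide

lemma det_isLowerUni {m : ℕ} {L : Matrix (Fin m) (Fin m) (ZMod 2)}
    (h : IsLowerUni L) : L.det = 1 := by
  rw [Matrix.det_of_lowerTriangular L (fun i j hij => h.2 i j hij)]
  simp [h.1]

lemma det_isUpperUni {m : ℕ} {U : Matrix (Fin m) (Fin m) (ZMod 2)}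
    (h : IsUpperUni U) : U.det = 1 := by
  rw [Matrix.det_of_upperTriangular (fun i j hij => h.2 i j hij)]
  simp [h.1]

lemma det_submatrix_rev {r : ℕ} (M : Matrix (Fin r) (Fin r) (ZMod 2)) :
    (M.submatrix id Fin.rev).det = M.det := by
  have : (Fin.rev : Fin r → Fin r) = ⇑(Fin.revPerm) := rfl
  rw [this, Matrix.det_permute']
  rcases Int.units_eq_one_or (Equiv.Perm.sign Fin.revPerm) with h | h <;>
    rw [h] <;> simp

lemma antiDiag_eq (m : ℕ) :
    antiDiag m = (1 : Matrix (Fin m) (Fin m) (ZMod 2)).submatrix id Fin.rev := by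
  ext i j
  have hi := i.isLt
  have hj := j.isLt
  simp only [antiDiag, Matrix.submatrix_apply, id_eq, Matrix.one_apply, Fin.ext_iff,
    Fin.val_rev]
  by_cases h : i.val + j.val + 1 = m
  · rw [if_pos h, if_pos (by omega)]
  · rw [if_neg h, if_neg (by omega)]

lemma antiDiag_eq' (m : ℕ) :
    antiDiag m = (1 : Matrix (Fin m) (Fin m) (ZMod 2)).submatrix Fin.rev id := by
  ext i j
  have hi := i.isLt
  have hj := j.isLt
  simp only [antiDiag, Matrix.submatrix_apply, id_eq, Matrix.one_apply, Fin.ext_iff,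
    Fin.val_rev]
  by_cases h : i.val + j.val + 1 = m
  · rw [if_pos h, if_pos (by omega)]
  · rw [if_neg h, if_neg (by omega)]

lemma antiDiag_mul_antiDiag (m : ℕ) : antiDiag m * antiDiag m = 1 := by
  calc antiDiag m * antiDiag m
      = (1 : Matrix (Fin m) (Fin m) (ZMod 2)).submatrix id Fin.rev *
        (1 : Matrix (Fin m) (Fin m) (ZMod 2)).submatrix Fin.rev id := by
        rw [← antiDiag_eq, ← antiDiag_eq']
    _ = ((1 : Matrix (Fin m) (Fin m) (ZMod 2)) * 1).submatrix id id :=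
        (Matrix.submatrix_mul _ _ id Fin.rev id Fin.rev_bijective).symm
    _ = 1 := by rw [one_mul, Matrix.submatrix_id_id]

lemma mul_antiDiag {m : ℕ} (B : Matrix (Fin m) (Fin m) (ZMod 2)) :
    B * antiDiag m = B.submatrix id Fin.rev := by
  rw [antiDiag_eq m]
  have := (Matrix.submatrix_mul B (1 : Matrix (Fin m) (Fin m) (ZMod 2)) id id Fin.rev
    Function.bijective_id).symm
  rw [Matrix.submatrix_id_id] at this
  rw [this, mul_one]

lemma hybrid_zero {m : ℕ} (Cx Cy : Matrix (Fin m) (Fin m) (ZMod 2)) :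
    hybrid m 0 Cx Cy = Cx := by
  ext i j
  simp [hybrid, i.isLt]

lemma hybrid_mul {m : ℕ} (r : ℕ) (Cx Cy M : Matrix (Fin m) (Fin m) (ZMod 2)) :
    hybrid m r (Cx * M) (Cy * M) = hybrid m r Cx Cy * M := by
  ext i j
  by_cases h : i.val < m - r <;>
    simp [hybrid, Matrix.mul_apply, h]

lemma det_hybrid_one {m : ℕ} (r : ℕ) (h : r ≤ m) (B : Matrix (Fin m) (Fin m) (ZMod 2)) :
    (hybrid m r 1 B).det = (lead r h (B * antiDiag m)).det := by
  have hmr : (m - r) + r = m := Nat.sub_add_cancel h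
  let e : Fin (m - r) ⊕ Fin r ≃ Fin m := finSumFinEquiv.trans (finCongr hmr)
  have hval_l : ∀ a : Fin (m - r), (e (Sum.inl a)).val = a.val := fun a => rfl
  have hval_r : ∀ a : Fin r, (e (Sum.inr a)).val = (m - r) + a.val := fun a => rfl
  rw [← Matrix.det_submatrix_equiv_self e]
  set H := (hybrid m r 1 B).submatrix e e with hH
  have h11 : H.toBlocks₁₁ = 1 := by
    ext a b
    have ha := a.isLt
    simp only [Matrix.toBlocks₁₁, Matrix.of_apply, hH, Matrix.submatrix_apply]
    rw [show hybrid m r 1 B (e (Sum.inl a)) (e (Sum.inl b)) =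
      (1 : Matrix (Fin m) (Fin m) (ZMod 2)) (e (Sum.inl a)) (e (Sum.inl b)) from
      if_pos (by rw [hval_l]; exact a.isLt)]
    simp only [Matrix.one_apply, Fin.ext_iff, hval_l]
  have h12 : H.toBlocks₁₂ = 0 := by
    ext a b
    have ha := a.isLt
    simp only [Matrix.toBlocks₁₂, Matrix.of_apply, hH, Matrix.submatrix_apply]
    rw [show hybrid m r 1 B (e (Sum.inl a)) (e (Sum.inr b)) =
      (1 : Matrix (Fin m) (Fin m) (ZMod 2)) (e (Sum.inl a)) (e (Sum.inr b)) from
      if_pos (by rw [hval_l]; exact a.isLt)]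
    rw [Matrix.one_apply_ne (by
      simp only [Fin.ext_iff, hval_l, hval_r, ne_eq]
      omega)]
    rfl
  have h22 : H.toBlocks₂₂ = (lead r h (B * antiDiag m)).submatrix id Fin.rev := by
    ext a b
    have ha := a.isLt
    have hb := b.isLt
    simp only [Matrix.toBlocks₂₂, Matrix.of_apply, hH, Matrix.submatrix_apply]
    rw [show hybrid m r 1 B (e (Sum.inr a)) (e (Sum.inr b)) =
      B ⟨(e (Sum.inr a)).val - (m - r), _⟩ (e (Sum.inr b)) from
      if_neg (by rw [hval_r]; omega)]
    rw [DyadicAux.mul_antiDiag]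
    simp only [Matrix.submatrix_apply, id_eq, lead]
    congr 1
    · exact Fin.ext (show (e (Sum.inr a)).val - (m - r) = a.val by rw [hval_r]; omega)
    · refine Fin.ext ?_
      rw [hval_r]
      simp only [Fin.val_rev, Fin.coe_castLE]
      omega
  rw [← Matrix.fromBlocks_toBlocks H, h11, h12, h22, Matrix.det_fromBlocks_zero₁₂,
    Matrix.det_one, one_mul, det_submatrix_rev]

lemma lead_full {m : ℕ} (A : Matrix (Fin m) (Fin m) (ZMod 2)) :
    lead m le_rfl A = A := by
  ext i j
  simp only [lead, Matrix.submatrix_apply]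
  congr 1 <;> exact Fin.ext rfl

lemma isLowerUni_lead {m r : ℕ} (h : r ≤ m) {L : Matrix (Fin m) (Fin m) (ZMod 2)}
    (hL : IsLowerUni L) : IsLowerUni (lead r h L) :=
  ⟨fun i => hL.1 _, fun i j hij => hL.2 _ _ (show _ < _ by
    simp only [Fin.lt_def, Fin.coe_castLE]; exact hij)⟩

lemma isUpperUni_lead {m r : ℕ} (h : r ≤ m) {U : Matrix (Fin m) (Fin m) (ZMod 2)}
    (hU : IsUpperUni U) : IsUpperUni (lead r h U) :=
  ⟨fun i => hU.1 _, fun i j hij => hU.2 _ _ (show _ < _ by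
    simp only [Fin.lt_def, Fin.coe_castLE]; exact hij)⟩

lemma lead_mul {m r : ℕ} (h : r ≤ m) {L U : Matrix (Fin m) (Fin m) (ZMod 2)}
    (hL : ∀ i j : Fin m, i < j → L i j = 0) :
    lead r h (L * U) = lead r h L * lead r h U := by
  ext i j
  simp only [lead, Matrix.submatrix_apply, Matrix.mul_apply]
  set g : ℕ → ZMod 2 := fun k =>
    if hk : k < m then L (Fin.castLE h i) ⟨k, hk⟩ * U ⟨k, hk⟩ (Fin.castLE h j) else 0
    with hg
  have h1 : ∀ k : Fin m, L (Fin.castLE h i) k * U k (Fin.castLE h j) = g k.val := by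
    intro k
    rw [hg]
    simp [k.isLt]
  have h2 : ∀ k : Fin r, L (Fin.castLE h i) (Fin.castLE h k) * U (Fin.castLE h k) (Fin.castLE h j)
      = g k.val := by
    intro k
    have hk : k.val < m := lt_of_lt_of_le k.isLt h
    simp only [hg]
    rw [dif_pos hk]
    congr 1 <;> exact Fin.ext rfl
  simp only [h1, h2, Fin.coe_castLE]
  rw [Fin.sum_univ_eq_sum_range g m, Fin.sum_univ_eq_sum_range g r]
  symm
  apply Finset.sum_subset (Finset.range_subset_range.2 h)
  intro k hk hkr
  simp only [Finset.mem_range] at hk hkr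
  rw [hg]
  simp only [dif_pos hk]
  rw [hL _ _ (by simp [Fin.lt_def]; omega), zero_mul]

lemma lu_lead_det {m : ℕ} {L U : Matrix (Fin m) (Fin m) (ZMod 2)}
    (hL : IsLowerUni L) (hU : IsUpperUni U) :
    ∀ r, ∀ h : r ≤ m, (lead r h (L * U)).det ≠ 0 := by
  intro r h
  rw [lead_mul h hL.2, Matrix.det_mul, det_isLowerUni (isLowerUni_lead h hL),
    det_isUpperUni (isUpperUni_lead h hU), one_mul]
  exact one_ne_zero

lemma isLowerUni_assemble {m : ℕ} {L' : Matrix (Fin m) (Fin m) (ZMod 2)}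
    (hL' : IsLowerUni L') (x : Matrix (Fin 1) (Fin m) (ZMod 2)) :
    IsLowerUni ((Matrix.fromBlocks L' 0 x (1 : Matrix (Fin 1) (Fin 1) (ZMod 2))).submatrix
      finSumFinEquiv.symm finSumFinEquiv.symm) := by
  have hval : ∀ i : Fin (m + 1), ∀ a : Fin m,
      finSumFinEquiv.symm i = Sum.inl a → i.val = a.val := by
    intro i a ha
    have : i = finSumFinEquiv (Sum.inl a) := by rw [← ha, Equiv.apply_symm_apply]
    rw [this]; rfl
  have hval' : ∀ i : Fin (m + 1), ∀ a : Fin 1,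
      finSumFinEquiv.symm i = Sum.inr a → i.val = m + a.val := by
    intro i a ha
    have : i = finSumFinEquiv (Sum.inr a) := by rw [← ha, Equiv.apply_symm_apply]
    rw [this]; rfl
  constructor
  · intro i
    rcases hsi : finSumFinEquiv.symm i with a | a
    · simp [hsi, hL'.1 a]
    · simp [hsi, Matrix.one_apply]
  · intro i j hij
    rw [Fin.lt_def] at hij
    rcases hsi : finSumFinEquiv.symm i with a | a <;>
      rcases hsj : finSumFinEquiv.symm j with b | b
    · have h1 := hval i a hsi
      have h2 := hval j b hsj
      simp only [Matrix.submatrix_apply, hsi, hsj, Matrix.fromBlocks_apply₁₁]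
      exact hL'.2 a b (by rw [Fin.lt_def]; omega)
    · simp [hsi, hsj]
    · have h1 := hval' i a hsi
      have h2 := hval j b hsj
      have := b.isLt
      omega
    · have h1 := hval' i a hsi
      have h2 := hval' j b hsj
      have := a.isLt
      have := b.isLt
      omega

lemma isUpperUni_assemble {m : ℕ} {U' : Matrix (Fin m) (Fin m) (ZMod 2)}
    (hU' : IsUpperUni U') (y : Matrix (Fin m) (Fin 1) (ZMod 2)) :
    IsUpperUni ((Matrix.fromBlocks U' y 0 (1 : Matrix (Fin 1) (Fin 1) (ZMod 2))).submatrix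
      finSumFinEquiv.symm finSumFinEquiv.symm) := by
  have hval : ∀ i : Fin (m + 1), ∀ a : Fin m,
      finSumFinEquiv.symm i = Sum.inl a → i.val = a.val := by
    intro i a ha
    have : i = finSumFinEquiv (Sum.inl a) := by rw [← ha, Equiv.apply_symm_apply]
    rw [this]; rfl
  have hval' : ∀ i : Fin (m + 1), ∀ a : Fin 1,
      finSumFinEquiv.symm i = Sum.inr a → i.val = m + a.val := by
    intro i a ha
    have : i = finSumFinEquiv (Sum.inr a) := by rw [← ha, Equiv.apply_symm_apply]
    rw [this]; rfl
  constructor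
  · intro i
    rcases hsi : finSumFinEquiv.symm i with a | a
    · simp [hsi, hU'.1 a]
    · simp [hsi, Matrix.one_apply]
  · intro i j hij
    rw [Fin.lt_def] at hij
    rcases hsi : finSumFinEquiv.symm i with a | a <;>
      rcases hsj : finSumFinEquiv.symm j with b | b
    · have h1 := hval i a hsi
      have h2 := hval j b hsj
      simp only [Matrix.submatrix_apply, hsi, hsj, Matrix.fromBlocks_apply₁₁]
      exact hU'.2 a b (by rw [Fin.lt_def]; omega)
    · have h1 := hval i a hsi
      have h2 := hval' j b hsj
      have := a.isLt
      omega
    · simp [hsi, hsj]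
    · have h1 := hval' i a hsi
      have h2 := hval' j b hsj
      have := a.isLt
      have := b.isLt
      omega

lemma lu_exists : ∀ (m : ℕ) (A : Matrix (Fin m) (Fin m) (ZMod 2)),
    (∀ r, ∀ h : r ≤ m, (lead r h A).det ≠ 0) →
    ∃ L U, IsLowerUni L ∧ IsUpperUni U ∧ A = L * U := by
  intro m
  induction m with
  | zero =>
    intro A _
    exact ⟨1, 1, ⟨fun i => i.elim0, fun i _ _ => i.elim0⟩,
      ⟨fun i => i.elim0, fun i _ _ => i.elim0⟩, by ext i; exact i.elim0⟩
  | succ m ih =>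
    intro A hA
    set e : Fin m ⊕ Fin 1 ≃ Fin (m + 1) := finSumFinEquiv with he
    have hval_l : ∀ a : Fin m, (e (Sum.inl a)).val = a.val := fun a => rfl
    have hval_r : ∀ a : Fin 1, (e (Sum.inr a)).val = m + a.val := fun a => rfl
    set As := A.submatrix e e with hAs
    set A' := As.toBlocks₁₁ with hA'def
    have hA' : ∀ r, ∀ h : r ≤ m, (lead r h A').det ≠ 0 := by
      intro r h
      have heq : lead r h A' = lead r (h.trans (Nat.le_succ m)) A := by
        ext i j
        simp only [lead, Matrix.submatrix_apply, hA'def, Matrix.toBlocks₁₁, hAs,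
          Matrix.of_apply]
        congr 1 <;> exact Fin.ext rfl
      rw [heq]
      exact hA r _
    obtain ⟨L', U', hL', hU', hLU⟩ := ih A' hA'
    have hdL : IsUnit L'.det := by rw [det_isLowerUni hL']; exact isUnit_one
    have hdU : IsUnit U'.det := by rw [det_isUpperUni hU']; exact isUnit_one
    have hdA' : IsUnit A'.det := by
      rw [hLU, Matrix.det_mul, det_isLowerUni hL', det_isUpperUni hU']
      exact isUnit_one
    set b := As.toBlocks₁₂ with hbdef
    set c := As.toBlocks₂₁ with hcdef
    set d := As.toBlocks₂₂ with hddef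
    set x := c * U'⁻¹ with hxdef
    set y := L'⁻¹ * b with hydef
    have hdetA : A.det ≠ 0 := by
      have := hA (m + 1) le_rfl
      rwa [lead_full] at this
    have hAinv : A'⁻¹ = U'⁻¹ * L'⁻¹ := by rw [hLU, Matrix.mul_inv_rev]
    have hxy : c * A'⁻¹ * b = x * y := by
      rw [hAinv, hxdef, hydef, Matrix.mul_assoc, Matrix.mul_assoc, Matrix.mul_assoc]
    have hδ : d - x * y = 1 := by
      have hInv : Invertible A' := A'.invertibleOfIsUnitDet hdA'
      have hdet : As.det = A'.det * (d - c * A'⁻¹ * b).det := by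
        rw [← Matrix.invOf_eq_nonsing_inv]
        rw [show As = Matrix.fromBlocks A' b c d from (Matrix.fromBlocks_toBlocks As).symm]
        exact Matrix.det_fromBlocks₁₁ A' b c d
      have hAsdet : As.det ≠ 0 := by
        rw [hAs, Matrix.det_submatrix_equiv_self]
        exact hdetA
      rw [hdet, hxy] at hAsdet
      have hne : (d - x * y).det ≠ 0 := fun h0 => hAsdet (by rw [h0, mul_zero])
      rw [Matrix.det_fin_one] at hne
      ext i j
      rw [Subsingleton.elim i 0, Subsingleton.elim j 0]
      rw [zmod2_ne_zero _ hne]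
      simp [Matrix.one_apply]
    set P := Matrix.fromBlocks L' 0 x (1 : Matrix (Fin 1) (Fin 1) (ZMod 2)) with hP
    set Q := Matrix.fromBlocks U' y 0 (1 : Matrix (Fin 1) (Fin 1) (ZMod 2)) with hQ
    have hPQ : P * Q = As := by
      rw [hP, hQ, Matrix.fromBlocks_multiply]
      rw [show As = Matrix.fromBlocks A' b c d from (Matrix.fromBlocks_toBlocks As).symm]
      have e11 : L' * U' + (0 : Matrix (Fin m) (Fin 1) (ZMod 2)) * (0 : Matrix (Fin 1) (Fin m) (ZMod 2)) = A' := by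
        rw [Matrix.zero_mul, add_zero]; exact hLU.symm
      have e12 : L' * y + (0 : Matrix (Fin m) (Fin 1) (ZMod 2)) * (1 : Matrix (Fin 1) (Fin 1) (ZMod 2)) = b := by
        rw [Matrix.zero_mul, add_zero, hydef, Matrix.mul_nonsing_inv_cancel_left L' b hdL]
      have e21 : x * U' + (1 : Matrix (Fin 1) (Fin 1) (ZMod 2)) * (0 : Matrix (Fin 1) (Fin m) (ZMod 2)) = c := by
        rw [Matrix.mul_zero, add_zero, hxdef, Matrix.nonsing_inv_mul_cancel_right U' c hdU]
      have e22 : x * y + (1 : Matrix (Fin 1) (Fin 1) (ZMod 2)) * (1 : Matrix (Fin 1) (Fin 1) (ZMod 2)) = d := by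
        rw [Matrix.one_mul]
        have hd : d = 1 + x * y := sub_eq_iff_eq_add.mp hδ
        rw [hd, add_comm]
      rw [e11, e12, e21, e22]
    refine ⟨P.submatrix e.symm e.symm, Q.submatrix e.symm e.symm,
      isLowerUni_assemble hL' x, isUpperUni_assemble hU' y, ?_⟩
    have hfin : P.submatrix e.symm e.symm * Q.submatrix e.symm e.symm = A := by
      rw [Matrix.submatrix_mul_equiv, hPQ, hAs, Matrix.submatrix_submatrix]
      rw [Equiv.self_comp_symm, Matrix.submatrix_id_id]
    exact hfin.symm

end DyadicAux

theorem dyadicPair_iff (m : ℕ) (Cx Cy : Matrix (Fin m) (Fin m) (ZMod 2)) :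
    DyadicPair Cx Cy ↔
      IsUnit Cx ∧ ∃ L U, IsLowerUni L ∧ IsUpperUni U ∧
        Cy = L * U * antiDiag m * Cx := by
  constructor
  · intro h
    have hCx : IsUnit Cx := by
      rw [Matrix.isUnit_iff_isUnit_det]
      have h0 := h 0 (Nat.zero_le m)
      rw [DyadicAux.hybrid_zero] at h0
      exact isUnit_iff_ne_zero.mpr h0
    have hdCx : IsUnit Cx.det := (Matrix.isUnit_iff_isUnit_det Cx).mp hCx
    refine ⟨hCx, ?_⟩
    set B := Cy * Cx⁻¹ with hB
    have hdyB : ∀ r, ∀ hr : r ≤ m, (DyadicAux.lead r hr (B * antiDiag m)).det ≠ 0 := by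
      intro r hr
      rw [← DyadicAux.det_hybrid_one r hr]
      have hh : hybrid m r 1 B = hybrid m r Cx Cy * Cx⁻¹ := by
        rw [← DyadicAux.hybrid_mul r Cx Cy Cx⁻¹, Matrix.mul_nonsing_inv Cx hdCx]
      rw [hh, Matrix.det_mul]
      have hdinv : Cx⁻¹.det ≠ 0 := by
        have h1 := Matrix.det_nonsing_inv_mul_det Cx hdCx
        intro h0
        rw [h0, zero_mul] at h1
        exact one_ne_zero h1.symm
      exact mul_ne_zero (h r hr) hdinv
    obtain ⟨L, U, hL, hU, hLU⟩ := DyadicAux.lu_exists m (B * antiDiag m) hdyB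
    refine ⟨L, U, hL, hU, ?_⟩
    have h1 : B * antiDiag m * antiDiag m = B := by
      rw [Matrix.mul_assoc, DyadicAux.antiDiag_mul_antiDiag, Matrix.mul_one]
    calc Cy = B * Cx := by
          rw [hB]; exact (Matrix.nonsing_inv_mul_cancel_right Cx Cy hdCx).symm
      _ = B * antiDiag m * antiDiag m * Cx := by rw [h1]
      _ = L * U * antiDiag m * Cx := by rw [hLU]
  · rintro ⟨hCx, L, U, hL, hU, rfl⟩
    have hdCx : IsUnit Cx.det := (Matrix.isUnit_iff_isUnit_det Cx).mp hCx
    intro r hr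
    set B := L * U * antiDiag m with hB
    have hh : hybrid m r Cx (B * Cx) = hybrid m r 1 B * Cx := by
      rw [← DyadicAux.hybrid_mul r 1 B Cx, Matrix.one_mul]
    rw [hh, Matrix.det_mul]
    apply mul_ne_zero
    · rw [DyadicAux.det_hybrid_one r hr]
      have hBJ : B * antiDiag m = L * U := by
        rw [hB, Matrix.mul_assoc (L * U), DyadicAux.antiDiag_mul_antiDiag, Matrix.mul_one]
      rw [hBJ]
      exact DyadicAux.lu_lead_det hL hU r hr
    · exact isUnit_iff_ne_zero.mp hdCx
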